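/- For every k ∈ ℤ_{>0}, let H_k be the graph on vertices v_0, …, v_{2^{k−1}} plus vertices w_{i,j} for all pairs i < j with j − i a power of 2, with edges {v_{i−1}, v_i} for all i, and edges {v_i, w_{i,j}}, {w_{i,j}, v_j} for each such pair. Let F be any edge subset of H_k that contains at least one edge incident to each vertex w_{i,j}. Then there exists ℓ ∈ [2^k] such that |F ∩ δ(S_ℓ)| ≥ k, where S_ℓ := {v_i : 2i < ℓ} ∪ {w_{i,j} : i + j < ℓ}. -/

import Mathlib

open scoped Classical

noncomputable section

/-- Vertices of the graphs `H_k`: path vertices `v i = Sum.inl i` and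
auxiliary vertices `w i j = Sum.inr (i, j)`. -/
abbrev HVtx : Type := ℕ ⊕ (ℕ × ℕ)

/-- `m` is a power of two. -/
def IsPow2 (m : ℕ) : Prop := ∃ ℓ : ℕ, m = 2 ^ ℓ

/-- The pair `(i, j)` indexes an auxiliary vertex `w_{i,j}` of `H_k`. -/
def ValidW (k i j : ℕ) : Prop := i < j ∧ j ≤ 2 ^ (k - 1) ∧ IsPow2 (j - i)

/-- The edges of `H_k`: the path edges `{v_{i-1}, v_i}` and, for each valid pair
`(i, j)`, the edges `{v_i, w_{i,j}}` and `{w_{i,j}, v_j}`. -/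
def HkEdge (k : ℕ) (e : Sym2 HVtx) : Prop :=
  (∃ i : ℕ, 1 ≤ i ∧ i ≤ 2 ^ (k - 1) ∧ e = s(Sum.inl (i - 1), Sum.inl i)) ∨
  (∃ i j : ℕ, ValidW k i j ∧
    (e = s(Sum.inl i, Sum.inr (i, j)) ∨ e = s(Sum.inr (i, j), Sum.inl j)))

/-- The cut `S_ℓ = {v_i : 2i < ℓ} ∪ {w_{i,j} : i + j < ℓ}`. -/
def Sset (ℓ : ℕ) : Set HVtx :=
  {z | (∃ i, z = Sum.inl i ∧ 2 * i < ℓ) ∨ ∃ i j, z = Sum.inr (i, j) ∧ i + j < ℓ}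

/-- An edge crosses the cut `S` if it has exactly one endpoint in `S`. -/
def crossingS (S : Set HVtx) (e : Sym2 HVtx) : Prop :=
  ∃ u v, e = s(u, v) ∧ u ∈ S ∧ v ∉ S

lemma mem_Sset_inl (i ℓ : ℕ) : (Sum.inl i : HVtx) ∈ Sset ℓ ↔ 2 * i < ℓ := by
  constructor
  · rintro (⟨i', hi, h⟩ | ⟨i', j', hi, h⟩)
    · cases hi; exact h
    · exact absurd hi (by simp)
  · intro h; exact Or.inl ⟨i, rfl, h⟩

lemma mem_Sset_inr (i j ℓ : ℕ) : (Sum.inr (i, j) : HVtx) ∈ Sset ℓ ↔ i + j < ℓ := by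
  constructor
  · rintro (⟨i', hi, h⟩ | ⟨i', j', hi, h⟩)
    · exact absurd hi (by simp)
    · obtain ⟨rfl, rfl⟩ : i = i' ∧ j = j' := by simpa using hi
      exact h
  · intro h; exact Or.inr ⟨i, j, rfl, h⟩

/-- The key generalized lemma: offset version of the statement, counting only
locally supported `w`-edges. -/
lemma key_lemma : ∀ m : ℕ, 1 ≤ m → ∀ (c : ℕ) (F : Finset (Sym2 HVtx)),
    (∀ i j : ℕ, c ≤ i → i < j → j ≤ c + 2 ^ (m - 1) → IsPow2 (j - i) →
      ∃ e ∈ F, e = s(Sum.inl i, Sum.inr (i, j)) ∨ e = s(Sum.inr (i, j), Sum.inl j)) →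
    ∃ ℓ : ℕ, 2 * c < ℓ ∧ ℓ ≤ 2 * c + 2 ^ m ∧
      m ≤ (F.filter (fun e => crossingS (Sset ℓ) e ∧
        ∃ i j : ℕ, c ≤ i ∧ j ≤ c + 2 ^ (m - 1) ∧
          (e = s(Sum.inl i, Sum.inr (i, j)) ∨ e = s(Sum.inr (i, j), Sum.inl j)))).card := by
  intro m hm
  induction m, hm using Nat.le_induction with
  | base =>
    intro c F hcov
    obtain ⟨e, heF, he⟩ := hcov c (c + 1) le_rfl (by omega) (by norm_num) ⟨0, by omega⟩
    rcases he with he | he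
    · refine ⟨2 * c + 1, by omega, by norm_num, ?_⟩
      have hmem : e ∈ F.filter (fun e => crossingS (Sset (2 * c + 1)) e ∧
          ∃ i j : ℕ, c ≤ i ∧ j ≤ c + 2 ^ (1 - 1) ∧
            (e = s(Sum.inl i, Sum.inr (i, j)) ∨ e = s(Sum.inr (i, j), Sum.inl j))) := by
        refine Finset.mem_filter.mpr ⟨heF, ?_, c, c + 1, le_rfl, by norm_num, Or.inl he⟩
        exact ⟨Sum.inl c, Sum.inr (c, c + 1), he,
          (mem_Sset_inl _ _).mpr (by omega), by rw [mem_Sset_inr]; omega⟩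
      calc 1 = ({e} : Finset (Sym2 HVtx)).card := rfl
        _ ≤ _ := Finset.card_le_card (by simpa using hmem)
    · refine ⟨2 * c + 2, by omega, by norm_num, ?_⟩
      have hmem : e ∈ F.filter (fun e => crossingS (Sset (2 * c + 2)) e ∧
          ∃ i j : ℕ, c ≤ i ∧ j ≤ c + 2 ^ (1 - 1) ∧
            (e = s(Sum.inl i, Sum.inr (i, j)) ∨ e = s(Sum.inr (i, j), Sum.inl j))) := by
        refine Finset.mem_filter.mpr ⟨heF, ?_, c, c + 1, le_rfl, by norm_num, Or.inr he⟩
        refine ⟨Sum.inr (c, c + 1), Sum.inl (c + 1), by rw [he, Sym2.eq_swap],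
          (mem_Sset_inr _ _ _).mpr (by omega), by rw [mem_Sset_inl]; omega⟩
      calc 1 = ({e} : Finset (Sym2 HVtx)).card := rfl
        _ ≤ _ := Finset.card_le_card (by simpa using hmem)
  | succ m hm ih =>
    intro c F hcov
    have hms : m + 1 - 1 = m := rfl
    rw [hms] at hcov
    have hB : (2 : ℕ) ^ m = 2 * 2 ^ (m - 1) := by
      conv_lhs => rw [show m = m - 1 + 1 by omega]
      ring
    have hA : (2 : ℕ) ^ (m + 1) = 2 * 2 ^ m := by ring
    have hC : 0 < (2 : ℕ) ^ (m - 1) := Nat.pow_pos (by norm_num)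
    obtain ⟨e0, he0F, he0⟩ := hcov c (c + 2 ^ m) le_rfl (by omega) le_rfl ⟨m, by omega⟩
    rcases he0 with he0 | he0
    · -- lower half : e0 = {v_c, w_{c, c+2^m}}
      obtain ⟨ℓ, hℓ1, hℓ2, hcard⟩ := ih c F (fun i j h1 h2 h3 h4 =>
        hcov i j h1 h2 (by omega) h4)
      refine ⟨ℓ, hℓ1, by omega, ?_⟩
      set T := F.filter (fun e => crossingS (Sset ℓ) e ∧
        ∃ i j : ℕ, c ≤ i ∧ j ≤ c + 2 ^ (m - 1) ∧
          (e = s(Sum.inl i, Sum.inr (i, j)) ∨ e = s(Sum.inr (i, j), Sum.inl j))) with hT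
      set T' := F.filter (fun e => crossingS (Sset ℓ) e ∧
        ∃ i j : ℕ, c ≤ i ∧ j ≤ c + 2 ^ (m + 1 - 1) ∧
          (e = s(Sum.inl i, Sum.inr (i, j)) ∨ e = s(Sum.inr (i, j), Sum.inl j))) with hT'
      have hsub : T ⊆ T' := by
        intro e he
        rw [hT, Finset.mem_filter] at he
        rw [hT', Finset.mem_filter]
        obtain ⟨h1, h2, i, j, h3, h4, h5⟩ := he
        exact ⟨h1, h2, i, j, h3, by rw [hms]; omega, h5⟩
      have he0T' : e0 ∈ T' := by
        rw [hT', Finset.mem_filter]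
        refine ⟨he0F, ?_, c, c + 2 ^ m, le_rfl, by rw [hms], Or.inl he0⟩
        exact ⟨Sum.inl c, Sum.inr (c, c + 2 ^ m), he0,
          (mem_Sset_inl _ _).mpr hℓ1, by rw [mem_Sset_inr]; omega⟩
      have he0T : e0 ∉ T := by
        rw [hT, Finset.mem_filter]
        rintro ⟨-, -, i, j, h3, h4, h5⟩
        have hmem : (Sum.inr (i, j) : HVtx) ∈ e0 := by
          rcases h5 with h5 | h5 <;> rw [h5] <;> simp
        rw [he0, Sym2.mem_iff] at hmem
        simp only [Sum.inr.injEq, Prod.mk.injEq, reduceCtorEq, false_or, or_false] at hmem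
        omega
      calc m + 1 ≤ T.card + 1 := by omega
        _ = (insert e0 T).card := (Finset.card_insert_of_notMem he0T).symm
        _ ≤ T'.card := Finset.card_le_card (by
            intro e he; rcases Finset.mem_insert.mp he with rfl | he
            · exact he0T'
            · exact hsub he)
    · -- upper half : e0 = {w_{c, c+2^m}, v_{c+2^m}}
      obtain ⟨ℓ, hℓ1, hℓ2, hcard⟩ := ih (c + 2 ^ (m - 1)) F (fun i j h1 h2 h3 h4 =>
        hcov i j (by omega) h2 (by omega) h4)
      refine ⟨ℓ, by omega, by omega, ?_⟩
      set T := F.filter (fun e => crossingS (Sset ℓ) e ∧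
        ∃ i j : ℕ, c + 2 ^ (m - 1) ≤ i ∧ j ≤ c + 2 ^ (m - 1) + 2 ^ (m - 1) ∧
          (e = s(Sum.inl i, Sum.inr (i, j)) ∨ e = s(Sum.inr (i, j), Sum.inl j))) with hT
      set T' := F.filter (fun e => crossingS (Sset ℓ) e ∧
        ∃ i j : ℕ, c ≤ i ∧ j ≤ c + 2 ^ (m + 1 - 1) ∧
          (e = s(Sum.inl i, Sum.inr (i, j)) ∨ e = s(Sum.inr (i, j), Sum.inl j))) with hT'
      have hsub : T ⊆ T' := by
        intro e he
        rw [hT, Finset.mem_filter] at he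
        rw [hT', Finset.mem_filter]
        obtain ⟨h1, h2, i, j, h3, h4, h5⟩ := he
        exact ⟨h1, h2, i, j, by omega, by rw [hms]; omega, h5⟩
      have he0T' : e0 ∈ T' := by
        rw [hT', Finset.mem_filter]
        refine ⟨he0F, ?_, c, c + 2 ^ m, le_rfl, by rw [hms], Or.inr he0⟩
        refine ⟨Sum.inr (c, c + 2 ^ m), Sum.inl (c + 2 ^ m), by rw [he0, Sym2.eq_swap],
          (mem_Sset_inr _ _ _).mpr (by omega), by rw [mem_Sset_inl]; omega⟩
      have he0T : e0 ∉ T := by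
        rw [hT, Finset.mem_filter]
        rintro ⟨-, -, i, j, h3, h4, h5⟩
        have hmem : (Sum.inr (i, j) : HVtx) ∈ e0 := by
          rcases h5 with h5 | h5 <;> rw [h5] <;> simp
        rw [he0, Sym2.mem_iff] at hmem
        simp only [Sum.inr.injEq, Prod.mk.injEq, reduceCtorEq, false_or, or_false] at hmem
        omega
      calc m + 1 ≤ T.card + 1 := by omega
        _ = (insert e0 T).card := (Finset.card_insert_of_notMem he0T).symm
        _ ≤ T'.card := Finset.card_le_card (by
            intro e he; rcases Finset.mem_insert.mp he with rfl | he
            · exact he0T'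
            · exact hsub he)

theorem stmt13 (k : ℕ) (hk : 1 ≤ k)
    (F : Finset (Sym2 HVtx))
    (hFE : ∀ e ∈ F, HkEdge k e)
    (hcover : ∀ i j : ℕ, ValidW k i j → ∃ e ∈ F, (Sum.inr (i, j) : HVtx) ∈ e) :
    ∃ ℓ : ℕ, 1 ≤ ℓ ∧ ℓ ≤ 2 ^ k ∧
      k ≤ (F.filter (crossingS (Sset ℓ))).card := by
  have hcov' : ∀ i j : ℕ, 0 ≤ i → i < j → j ≤ 0 + 2 ^ (k - 1) → IsPow2 (j - i) →
      ∃ e ∈ F, e = s(Sum.inl i, Sum.inr (i, j)) ∨ e = s(Sum.inr (i, j), Sum.inl j) := by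
    intro i j _ h2 h3 h4
    obtain ⟨e, heF, he⟩ := hcover i j ⟨h2, by omega, h4⟩
    refine ⟨e, heF, ?_⟩
    rcases hFE e heF with ⟨i', -, -, rfl⟩ | ⟨i', j', -, h5 | h5⟩
    · rw [Sym2.mem_iff] at he
      rcases he with he | he <;> exact absurd he (by simp)
    · rw [h5, Sym2.mem_iff] at he
      simp only [Sum.inr.injEq, Prod.mk.injEq, reduceCtorEq, false_or] at he
      obtain ⟨rfl, rfl⟩ := he
      exact Or.inl h5
    · rw [h5, Sym2.mem_iff] at he
      simp only [Sum.inr.injEq, Prod.mk.injEq, reduceCtorEq, or_false] at he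
      obtain ⟨rfl, rfl⟩ := he
      exact Or.inr h5
  obtain ⟨ℓ, h1, h2, h3⟩ := key_lemma k hk 0 F hcov'
  refine ⟨ℓ, by omega, by omega, le_trans h3 (Finset.card_le_card ?_)⟩
  intro e he
  rw [Finset.mem_filter] at he ⊢
  exact ⟨he.1, he.2.1⟩
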